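/- Let G be a group and P ⊆ G a submonoid. Then the following are equivalent: (1) for every g ∈ P and every x ∈ G, x·g ∈ P if and only if x ∈ P; (2) P is closed under inverses, i.e. p⁻¹ ∈ P for every p ∈ P (so P is a subgroup of G). Condition (1) expresses that the indiscrete point of the right-preordered group (G,P) is a Schreier point, i.e. that the positive cone ⋃_{g∈P} P^{−g} × {g} of the indiscrete equivalence relation equals the product cone P × P; hence (G,P) admits an S-center exactly when P is a subgroup. -/
import Mathlib

/-- the indiscrete point of a right-preordered group `(G, P)` is a
Schreier point (i.e. for every `g ∈ P` and `x ∈ G`, `x * g ∈ P ↔ x ∈ P`) exactly when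
the positive cone `P` is closed under inverses, i.e. is a subgroup. -/
theorem indiscrete_schreier_iff_subgroup {G : Type*} [Group G] (P : Submonoid G) :
    (∀ g ∈ P, ∀ x : G, x * g ∈ P ↔ x ∈ P) ↔ (∀ p ∈ P, p⁻¹ ∈ P) := by
  constructor
  · intro h p hp
    have := (h p hp p⁻¹).mp (by simpa using P.one_mem)
    exact this
  · intro h g hg x
    constructor
    · intro hx
      have := P.mul_mem hx (h g hg)
      simpa using this
    · intro hx; exact P.mul_mem hx hg
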